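/- For a quartic monoid surface F = x₀f₃ + f₄ whose tangent cone f₃ = x₃(x₁x₂ + x₃²) is a conic plus a chord, the pair (λ₁q₁, λ₂q₂) with q₁ = f₄(s,t,0) (degree 4 in s,t) and q₂ = f₄(s², −t², st) (degree 8 in s,t) arises from some quartic f₄ if and only if λ₁b₀ = λ₂c₀ and λ₁b₄ = λ₂c₈, where b₀, b₄ are the coefficients of s⁴, t⁴ in q₁ and c₀, c₈ are the coefficients of s⁸, t⁸ in q₂; moreover the pair (f₄(s,t,0), f₄(s²,−t²,st)) determines f₄ modulo multiples of f₃. -/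

import Mathlib

open MvPolynomial Finsupp

set_option linter.unusedSectionVars false
namespace Stmt18aux
variable {K : Type*} [Field K] [CharZero K]

noncomputable def s2 (a b : ℕ) : Fin 2 →₀ ℕ := Finsupp.single 0 a + Finsupp.single 1 b
noncomputable def s3 (a b c : ℕ) : Fin 3 →₀ ℕ := Finsupp.single 0 a + Finsupp.single 1 b + Finsupp.single 2 c

@[simp] lemma s2_apply0 (a b : ℕ) : s2 a b 0 = a := by simp [s2]
@[simp] lemma s2_apply1 (a b : ℕ) : s2 a b 1 = b := by simp [s2]
@[simp] lemma s3_apply0 (a b c : ℕ) : s3 a b c 0 = a := by simp [s3]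
@[simp] lemma s3_apply1 (a b c : ℕ) : s3 a b c 1 = b := by simp [s3]
@[simp] lemma s3_apply2 (a b c : ℕ) : s3 a b c 2 = c := by simp [s3]

lemma s2_eq_iff {a b p q : ℕ} : s2 a b = s2 p q ↔ (a = p ∧ b = q) := by
  constructor
  · intro h
    exact ⟨by simpa using DFunLike.congr_fun h 0, by simpa using DFunLike.congr_fun h 1⟩
  · rintro ⟨rfl, rfl⟩; rfl

lemma fin2_eq (d : Fin 2 →₀ ℕ) : d = s2 (d 0) (d 1) := by
  ext i; fin_cases i <;> simp

lemma fin3_eq (d : Fin 3 →₀ ℕ) : d = s3 (d 0) (d 1) (d 2) := by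
  ext i; fin_cases i <;> simp

lemma s2_degree (a b : ℕ) : (s2 a b).degree = a + b := by
  rw [Finsupp.degree_eq_weight_one]
  simp [Finsupp.weight_apply, Finsupp.sum_fintype, Fin.sum_univ_two]

lemma s3_degree (a b c : ℕ) : (s3 a b c).degree = a + b + c := by
  rw [Finsupp.degree_eq_weight_one]
  simp [Finsupp.weight_apply, Finsupp.sum_fintype, Fin.sum_univ_three]


lemma mono2 (a b : ℕ) (k : K) :
    (monomial (s2 a b) k : MvPolynomial (Fin 2) K) = C k * X 0 ^ a * X 1 ^ b := by
  simp [s2, X_pow_eq_monomial, monomial_mul, C_mul_monomial]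

lemma mono3 (a b c : ℕ) (k : K) :
    (monomial (s3 a b c) k : MvPolynomial (Fin 3) K) = C k * X 0 ^ a * X 1 ^ b * X 2 ^ c := by
  simp [s3, X_pow_eq_monomial, monomial_mul, C_mul_monomial]

lemma coeff_s2_monomial (p q a b : ℕ) (k : K) :
    coeff (s2 p q) (monomial (s2 a b) k : MvPolynomial (Fin 2) K)
      = if a = p ∧ b = q then k else 0 := by
  rw [coeff_monomial]
  by_cases h : a = p ∧ b = q
  · rw [if_pos (s2_eq_iff.mpr h), if_pos h]
  · rw [if_neg (fun hh => h (s2_eq_iff.mp hh)), if_neg h]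

lemma homog3 (a b c n : ℕ) (k : K) (h : a + b + c = n) :
    (IsHomogeneous (C k * X 0 ^ a * X 1 ^ b * X 2 ^ c : MvPolynomial (Fin 3) K) n) := by
  rw [← mono3]
  exact isHomogeneous_monomial _ (by rw [s3_degree, h])


lemma expand2 {n : ℕ} (p : MvPolynomial (Fin 2) K) (hp : p.IsHomogeneous n) :
    p = ∑ i ∈ Finset.range (n+1), monomial (s2 (n-i) i) (coeff (s2 (n-i) i) p) := by
  have himg := Finset.sum_image (s := Finset.range (n+1)) (g := fun i => s2 (n-i) i)
      (f := fun d => (monomial d (coeff d p) : MvPolynomial (Fin 2) K))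
      (fun i _ j _ h => by have := s2_eq_iff.mp h; omega)
  conv_lhs => rw [p.as_sum]
  rw [← himg]
  apply Finset.sum_subset
  · intro d hd
    have hdeg : d.degree = n := by
      by_contra hne
      exact (MvPolynomial.mem_support_iff.mp hd) (hp.coeff_eq_zero hne)
    have h01 : d 0 + d 1 = n := by
      rw [fin2_eq d, s2_degree] at hdeg; exact hdeg
    rw [Finset.mem_image]
    refine ⟨d 1, Finset.mem_range.mpr (by omega), ?_⟩
    have h0 : d 0 = n - d 1 := by omega
    conv_rhs => rw [fin2_eq d, h0]
  · intro d _ hd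
    rw [MvPolynomial.mem_support_iff, not_not] at hd
    rw [hd, monomial_zero]

lemma expand3 {n : ℕ} (p : MvPolynomial (Fin 3) K) (hp : p.IsHomogeneous n) :
    p = ∑ bc ∈ (Finset.range (n+1) ×ˢ Finset.range (n+1)).filter (fun bc => bc.1 + bc.2 ≤ n),
      monomial (s3 (n-bc.1-bc.2) bc.1 bc.2) (coeff (s3 (n-bc.1-bc.2) bc.1 bc.2) p) := by
  have himg := Finset.sum_image
      (s := (Finset.range (n+1) ×ˢ Finset.range (n+1)).filter (fun bc => bc.1 + bc.2 ≤ n))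
      (g := fun bc => s3 (n-bc.1-bc.2) bc.1 bc.2)
      (f := fun d => (monomial d (coeff d p) : MvPolynomial (Fin 3) K))
      (fun i _ j _ h => by
        have h1 := DFunLike.congr_fun h 1
        have h2 := DFunLike.congr_fun h 2
        simp at h1 h2
        exact Prod.ext h1 h2)
  conv_lhs => rw [p.as_sum]
  rw [← himg]
  apply Finset.sum_subset
  · intro d hd
    have hdeg : d.degree = n := by
      by_contra hne
      exact (MvPolynomial.mem_support_iff.mp hd) (hp.coeff_eq_zero hne)
    have h01 : d 0 + d 1 + d 2 = n := by
      rw [fin3_eq d, s3_degree] at hdeg; exact hdeg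
    rw [Finset.mem_image]
    refine ⟨(d 1, d 2), ?_, ?_⟩
    · simp only [Finset.mem_filter, Finset.mem_product, Finset.mem_range]
      omega
    · have h0 : d 0 = n - d 1 - d 2 := by omega
      conv_rhs => rw [fin3_eq d, h0]
  · intro d _ hd
    rw [MvPolynomial.mem_support_iff, not_not] at hd
    rw [hd, monomial_zero]


lemma expand3_4 (p : MvPolynomial (Fin 3) K) (hp : p.IsHomogeneous 4) :
    p = C (p.coeff (s3 4 0 0)) * X 0 ^ 4 +
      C (p.coeff (s3 3 1 0)) * X 0 ^ 3 * X 1 +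
      C (p.coeff (s3 2 2 0)) * X 0 ^ 2 * X 1 ^ 2 +
      C (p.coeff (s3 1 3 0)) * X 0 * X 1 ^ 3 +
      C (p.coeff (s3 0 4 0)) * X 1 ^ 4 +
      C (p.coeff (s3 3 0 1)) * X 0 ^ 3 * X 2 +
      C (p.coeff (s3 2 1 1)) * X 0 ^ 2 * X 1 * X 2 +
      C (p.coeff (s3 1 2 1)) * X 0 * X 1 ^ 2 * X 2 +
      C (p.coeff (s3 0 3 1)) * X 1 ^ 3 * X 2 +
      C (p.coeff (s3 2 0 2)) * X 0 ^ 2 * X 2 ^ 2 +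
      C (p.coeff (s3 1 1 2)) * X 0 * X 1 * X 2 ^ 2 +
      C (p.coeff (s3 0 2 2)) * X 1 ^ 2 * X 2 ^ 2 +
      C (p.coeff (s3 1 0 3)) * X 0 * X 2 ^ 3 +
      C (p.coeff (s3 0 1 3)) * X 1 * X 2 ^ 3 +
      C (p.coeff (s3 0 0 4)) * X 2 ^ 4 := by
  conv_lhs => rw [expand3 p hp]
  simp only [Finset.sum_filter, Finset.sum_product, Finset.sum_range_succ, Finset.sum_range_zero]
  norm_num [mono3]
  ring

lemma expand2_4 (p : MvPolynomial (Fin 2) K) (hp : p.IsHomogeneous 4) :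
    p = C (p.coeff (s2 4 0)) * X 0 ^ 4 +
      C (p.coeff (s2 3 1)) * X 0 ^ 3 * X 1 +
      C (p.coeff (s2 2 2)) * X 0 ^ 2 * X 1 ^ 2 +
      C (p.coeff (s2 1 3)) * X 0 * X 1 ^ 3 +
      C (p.coeff (s2 0 4)) * X 1 ^ 4 := by
  conv_lhs => rw [expand2 p hp]
  simp only [Finset.sum_range_succ, Finset.sum_range_zero]
  norm_num [mono2]

lemma expand2_8 (p : MvPolynomial (Fin 2) K) (hp : p.IsHomogeneous 8) :
    p = C (p.coeff (s2 8 0)) * X 0 ^ 8 +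
      C (p.coeff (s2 7 1)) * X 0 ^ 7 * X 1 +
      C (p.coeff (s2 6 2)) * X 0 ^ 6 * X 1 ^ 2 +
      C (p.coeff (s2 5 3)) * X 0 ^ 5 * X 1 ^ 3 +
      C (p.coeff (s2 4 4)) * X 0 ^ 4 * X 1 ^ 4 +
      C (p.coeff (s2 3 5)) * X 0 ^ 3 * X 1 ^ 5 +
      C (p.coeff (s2 2 6)) * X 0 ^ 2 * X 1 ^ 6 +
      C (p.coeff (s2 1 7)) * X 0 * X 1 ^ 7 +
      C (p.coeff (s2 0 8)) * X 1 ^ 8 := by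
  conv_lhs => rw [expand2 p hp]
  simp only [Finset.sum_range_succ, Finset.sum_range_zero]
  norm_num [mono2]


lemma aeval1_expand (f : MvPolynomial (Fin 3) K) (hf : f.IsHomogeneous 4) :
    aeval (![X 0, X 1, 0] : Fin 3 → MvPolynomial (Fin 2) K) f =
      monomial (s2 4 0) (coeff (s3 4 0 0) f) +
      monomial (s2 3 1) (coeff (s3 3 1 0) f) +
      monomial (s2 2 2) (coeff (s3 2 2 0) f) +
      monomial (s2 1 3) (coeff (s3 1 3 0) f) +
      monomial (s2 0 4) (coeff (s3 0 4 0) f) := by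
  conv_lhs => rw [expand3_4 f hf]
  simp only [map_add, map_mul, map_pow, aeval_C, aeval_X, Matrix.cons_val_two, Matrix.tail_cons, Matrix.head_cons]
  norm_num [mono2]

lemma aeval2_expand (f : MvPolynomial (Fin 3) K) (hf : f.IsHomogeneous 4) :
    aeval (![X 0 ^ 2, -(X 1 ^ 2), X 0 * X 1] : Fin 3 → MvPolynomial (Fin 2) K) f =
      monomial (s2 8 0) (coeff (s3 4 0 0) f) +
      monomial (s2 7 1) (coeff (s3 3 0 1) f) +
      monomial (s2 6 2) (coeff (s3 2 0 2) f - coeff (s3 3 1 0) f) +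
      monomial (s2 5 3) (coeff (s3 1 0 3) f - coeff (s3 2 1 1) f) +
      monomial (s2 4 4) (coeff (s3 0 0 4) f + coeff (s3 2 2 0) f - coeff (s3 1 1 2) f) +
      monomial (s2 3 5) (coeff (s3 1 2 1) f - coeff (s3 0 1 3) f) +
      monomial (s2 2 6) (coeff (s3 0 2 2) f - coeff (s3 1 3 0) f) +
      monomial (s2 1 7) (- coeff (s3 0 3 1) f) +
      monomial (s2 0 8) (coeff (s3 0 4 0) f) := by
  conv_lhs => rw [expand3_4 f hf]
  simp only [map_add, map_mul, map_pow, aeval_C, aeval_X, Matrix.cons_val_two, Matrix.tail_cons, Matrix.head_cons]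
  norm_num [mono2, map_sub, map_add, map_neg]
  ring

lemma smul_expand4 (lam : K) (q : MvPolynomial (Fin 2) K) (hq : q.IsHomogeneous 4) :
    lam • q = monomial (s2 4 0) (lam * coeff (s2 4 0) q) +
      monomial (s2 3 1) (lam * coeff (s2 3 1) q) +
      monomial (s2 2 2) (lam * coeff (s2 2 2) q) +
      monomial (s2 1 3) (lam * coeff (s2 1 3) q) +
      monomial (s2 0 4) (lam * coeff (s2 0 4) q) := by
  rw [smul_eq_C_mul]
  conv_lhs => rw [expand2_4 q hq]
  simp only [mono2, map_mul]
  ring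

lemma smul_expand8 (lam : K) (q : MvPolynomial (Fin 2) K) (hq : q.IsHomogeneous 8) :
    lam • q = monomial (s2 8 0) (lam * coeff (s2 8 0) q) +
      monomial (s2 7 1) (lam * coeff (s2 7 1) q) +
      monomial (s2 6 2) (lam * coeff (s2 6 2) q) +
      monomial (s2 5 3) (lam * coeff (s2 5 3) q) +
      monomial (s2 4 4) (lam * coeff (s2 4 4) q) +
      monomial (s2 3 5) (lam * coeff (s2 3 5) q) +
      monomial (s2 2 6) (lam * coeff (s2 2 6) q) +
      monomial (s2 1 7) (lam * coeff (s2 1 7) q) +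
      monomial (s2 0 8) (lam * coeff (s2 0 8) q) := by
  rw [smul_eq_C_mul]
  conv_lhs => rw [expand2_8 q hq]
  simp only [mono2, map_mul]
  ring


lemma s2_left (a : ℕ) : s2 a 0 = Finsupp.single 0 a := by simp [s2]
lemma s2_right (b : ℕ) : s2 0 b = Finsupp.single 1 b := by simp [s2]

lemma homog_CX (k : K) (i : Fin 3) : (C k * X i : MvPolynomial (Fin 3) K).IsHomogeneous 1 := by
  exact isHomogeneous_C_mul_X k i

lemma homog_mono3 (a b c n : ℕ) (k : K) (h : a + b + c = n) :
    ((monomial (s3 a b c) k : MvPolynomial (Fin 3) K)).IsHomogeneous n :=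
  isHomogeneous_monomial _ (by rw [s3_degree, h])

end Stmt18aux

open Stmt18aux in
set_option maxHeartbeats 1600000 in
/-- for the tangent cone `f₃ = x₃(x₁x₂ + x₃²)` (conic plus chord), with the
line parameterized by `θ₁(s,t) = (s,t,0)` and the conic by `θ₂(s,t) = (s²,−t²,st)`, a pair
`(λ₁q₁, λ₂q₂)` of binary forms of degrees `4` and `8` arises as `(f₄(θ₁), f₄(θ₂))` for some
quartic `f₄` iff `λ₁b₀ = λ₂c₀` and `λ₁b₄ = λ₂c₈`; moreover `(f₄(θ₁), f₄(θ₂))` determines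
`f₄` modulo multiples `ℓ·f₃` of `f₃` by linear forms. -/
theorem stmt18 {K : Type*} [Field K] [CharZero K] :
    (∀ (q₁ q₂ : MvPolynomial (Fin 2) K) (lam₁ lam₂ : K), q₁.IsHomogeneous 4 →
      q₂.IsHomogeneous 8 →
      ((∃ f₄ : MvPolynomial (Fin 3) K, f₄.IsHomogeneous 4 ∧
          aeval (![X 0, X 1, 0] : Fin 3 → MvPolynomial (Fin 2) K) f₄ = lam₁ • q₁ ∧
          aeval (![X 0 ^ 2, -(X 1 ^ 2), X 0 * X 1] : Fin 3 → MvPolynomial (Fin 2) K) f₄ =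
            lam₂ • q₂) ↔
        (lam₁ * coeff (Finsupp.single 0 4) q₁ = lam₂ * coeff (Finsupp.single 0 8) q₂ ∧
         lam₁ * coeff (Finsupp.single 1 4) q₁ = lam₂ * coeff (Finsupp.single 1 8) q₂))) ∧
    (∀ f₄ f₄' : MvPolynomial (Fin 3) K, f₄.IsHomogeneous 4 → f₄'.IsHomogeneous 4 →
      ((aeval (![X 0, X 1, 0] : Fin 3 → MvPolynomial (Fin 2) K) f₄ =
          aeval (![X 0, X 1, 0] : Fin 3 → MvPolynomial (Fin 2) K) f₄' ∧
        aeval (![X 0 ^ 2, -(X 1 ^ 2), X 0 * X 1] : Fin 3 → MvPolynomial (Fin 2) K) f₄ =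
          aeval (![X 0 ^ 2, -(X 1 ^ 2), X 0 * X 1] : Fin 3 → MvPolynomial (Fin 2) K) f₄') ↔
        ∃ ℓ : MvPolynomial (Fin 3) K, ℓ.IsHomogeneous 1 ∧
          f₄ - f₄' = ℓ * (X 2 * (X 0 * X 1 + X 2 ^ 2)))) := by
  constructor
  · intro q₁ q₂ lam₁ lam₂ hq₁ hq₂
    constructor
    · rintro ⟨f, hf, h1, h2⟩
      rw [aeval1_expand f hf, smul_expand4 lam₁ q₁ hq₁] at h1
      rw [aeval2_expand f hf, smul_expand8 lam₂ q₂ hq₂] at h2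
      have e1 := congrArg (coeff (s2 4 0)) h1
      have e2 := congrArg (coeff (s2 0 4)) h1
      have e3 := congrArg (coeff (s2 8 0)) h2
      have e4 := congrArg (coeff (s2 0 8)) h2
      simp only [coeff_add, coeff_s2_monomial] at e1 e2 e3 e4
      norm_num at e1 e2 e3 e4
      rw [← s2_left 4, ← s2_left 8, ← s2_right 4, ← s2_right 8]
      constructor
      · rw [← e1, ← e3]
      · rw [← e2, ← e4]
    · rintro ⟨hA, hB⟩
      rw [← s2_left 4, ← s2_left 8] at hA
      rw [← s2_right 4, ← s2_right 8] at hB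
      refine ⟨monomial (s3 4 0 0) (lam₁ * coeff (s2 4 0) q₁) +
        monomial (s3 3 1 0) (lam₁ * coeff (s2 3 1) q₁) +
        monomial (s3 2 2 0) (lam₁ * coeff (s2 2 2) q₁) +
        monomial (s3 1 3 0) (lam₁ * coeff (s2 1 3) q₁) +
        monomial (s3 0 4 0) (lam₁ * coeff (s2 0 4) q₁) +
        monomial (s3 3 0 1) (lam₂ * coeff (s2 7 1) q₂) +
        monomial (s3 2 1 1) (- (lam₂ * coeff (s2 5 3) q₂)) +
        monomial (s3 1 2 1) (lam₂ * coeff (s2 3 5) q₂) +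
        monomial (s3 0 3 1) (- (lam₂ * coeff (s2 1 7) q₂)) +
        monomial (s3 2 0 2) ((lam₂ * coeff (s2 6 2) q₂) + (lam₁ * coeff (s2 3 1) q₁)) +
        monomial (s3 1 1 2) ((lam₁ * coeff (s2 2 2) q₁) - (lam₂ * coeff (s2 4 4) q₂)) +
        monomial (s3 0 2 2) ((lam₂ * coeff (s2 2 6) q₂) + (lam₁ * coeff (s2 1 3) q₁)), ?_, ?_, ?_⟩
      · repeat first
          | exact homog_mono3 _ _ _ _ _ (by norm_num)
          | apply IsHomogeneous.add
      · rw [smul_expand4 lam₁ q₁ hq₁]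
        simp only [mono3, map_add, map_mul, map_pow, aeval_C, aeval_X, Matrix.cons_val_two, Matrix.tail_cons, Matrix.head_cons]
        norm_num [mono2]
      · rw [smul_expand8 lam₂ q₂ hq₂]
        simp only [mono3, mono2, map_add, map_mul, map_pow, aeval_C, aeval_X, Matrix.cons_val_two, Matrix.tail_cons, Matrix.head_cons]
        norm_num [map_mul]
        have hA' : (C lam₁ * C (coeff (s2 4 0) q₁) : MvPolynomial (Fin 2) K)
            = C lam₂ * C (coeff (s2 8 0) q₂) := by rw [← map_mul, ← map_mul, hA]
        have hB' : (C lam₁ * C (coeff (s2 0 4) q₁) : MvPolynomial (Fin 2) K)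
            = C lam₂ * C (coeff (s2 0 8) q₂) := by rw [← map_mul, ← map_mul, hB]
        linear_combination hA' * X 0 ^ 8 + hB' * X 1 ^ 8
  · intro f₄ f₄' hf hf'
    constructor
    · rintro ⟨h1, h2⟩
      have hd : (f₄ - f₄').IsHomogeneous 4 := hf.sub hf'
      have h1' : aeval (![X 0, X 1, 0] : Fin 3 → MvPolynomial (Fin 2) K) (f₄ - f₄') = 0 := by
        rw [map_sub, h1, sub_self]
      have h2' : aeval (![X 0 ^ 2, -(X 1 ^ 2), X 0 * X 1] : Fin 3 → MvPolynomial (Fin 2) K)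
          (f₄ - f₄') = 0 := by
        rw [map_sub, h2, sub_self]
      rw [aeval1_expand _ hd] at h1'
      rw [aeval2_expand _ hd] at h2'
      have e40 := congrArg (coeff (s2 4 0)) h1'
      have e31 := congrArg (coeff (s2 3 1)) h1'
      have e22 := congrArg (coeff (s2 2 2)) h1'
      have e13 := congrArg (coeff (s2 1 3)) h1'
      have e04 := congrArg (coeff (s2 0 4)) h1'
      have g1 := congrArg (coeff (s2 7 1)) h2'
      have g2 := congrArg (coeff (s2 6 2)) h2'
      have g3 := congrArg (coeff (s2 5 3)) h2'
      have g4 := congrArg (coeff (s2 4 4)) h2'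
      have g5 := congrArg (coeff (s2 3 5)) h2'
      have g6 := congrArg (coeff (s2 2 6)) h2'
      have g7 := congrArg (coeff (s2 1 7)) h2'
      simp only [coeff_add, coeff_s2_monomial, coeff_zero] at e40 e31 e22 e13 e04 g1 g2 g3 g4 g5 g6 g7
      norm_num at e40 e31 e22 e13 e04 g1 g2 g3 g4 g5 g6 g7
      refine ⟨C (coeff (s3 2 1 1) f₄ - coeff (s3 2 1 1) f₄') * X 0 +
          C (coeff (s3 1 2 1) f₄ - coeff (s3 1 2 1) f₄') * X 1 +
          C (coeff (s3 1 1 2) f₄ - coeff (s3 1 1 2) f₄') * X 2, ?_, ?_⟩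
      · exact ((homog_CX _ 0).add (homog_CX _ 1)).add (homog_CX _ 2)
      · have E40 := congrArg (⇑(C : K →+* MvPolynomial (Fin 3) K)) e40
        have E31 := congrArg (⇑(C : K →+* MvPolynomial (Fin 3) K)) e31
        have E22 := congrArg (⇑(C : K →+* MvPolynomial (Fin 3) K)) e22
        have E13 := congrArg (⇑(C : K →+* MvPolynomial (Fin 3) K)) e13
        have E04 := congrArg (⇑(C : K →+* MvPolynomial (Fin 3) K)) e04
        have G1 := congrArg (⇑(C : K →+* MvPolynomial (Fin 3) K)) g1
        have G2 := congrArg (⇑(C : K →+* MvPolynomial (Fin 3) K)) g2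
        have G3 := congrArg (⇑(C : K →+* MvPolynomial (Fin 3) K)) g3
        have G4 := congrArg (⇑(C : K →+* MvPolynomial (Fin 3) K)) g4
        have G5 := congrArg (⇑(C : K →+* MvPolynomial (Fin 3) K)) g5
        have G6 := congrArg (⇑(C : K →+* MvPolynomial (Fin 3) K)) g6
        have G7 := congrArg (⇑(C : K →+* MvPolynomial (Fin 3) K)) g7
        simp only [map_sub, map_add, map_neg, map_zero] at E40 E31 E22 E13 E04 G1 G2 G3 G4 G5 G6 G7
        conv_lhs => rw [expand3_4 _ hd]
        simp only [coeff_sub, map_sub]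
        linear_combination E40 * X 0^4 + E31*(X 0^3*X 1 + X 0^2*X 2^2) + E22*(X 0^2*X 1^2 - X 2^4) +
          E13*(X 0*X 1^3 + X 1^2*X 2^2) + E04*X 1^4 + G1*X 0^3*X 2 - G7*X 1^3*X 2 +
          G2*X 0^2*X 2^2 + G6*X 1^2*X 2^2 + G3*X 0*X 2^3 - G5*X 1*X 2^3 + G4*X 2^4
    · rintro ⟨ℓ, hℓ, heq⟩
      have hg1 : aeval (![X 0, X 1, 0] : Fin 3 → MvPolynomial (Fin 2) K)
          ((X 2 * (X 0 * X 1 + X 2 ^ 2)) : MvPolynomial (Fin 3) K) = 0 := by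
        simp [map_mul, map_add, map_pow]
      have hg2 : aeval (![X 0 ^ 2, -(X 1 ^ 2), X 0 * X 1] : Fin 3 → MvPolynomial (Fin 2) K)
          ((X 2 * (X 0 * X 1 + X 2 ^ 2)) : MvPolynomial (Fin 3) K) = 0 := by
        simp [map_mul, map_add, map_pow]
        ring
      have hsum : f₄ = f₄' + ℓ * (X 2 * (X 0 * X 1 + X 2 ^ 2)) := by
        linear_combination heq
      constructor
      · rw [hsum, map_add, map_mul, hg1, mul_zero, add_zero]
      · rw [hsum, map_add, map_mul, hg2, mul_zero, add_zero]
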